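/- If a population network game is weighted zero-sum, then for every β > 0 it has exactly one quantal response equilibrium. -/

import Mathlib

open Real Filter

/-- Membership in the standard probability simplex on a finite set `S`. -/
def inSimplex {S : Type*} [Fintype S] (x : S → ℝ) : Prop :=
  (∀ s, 0 ≤ x s) ∧ ∑ s, x s = 1

/-- Membership in the product of simplices `Δ = ∏ i, Δ_i`. -/
def inProd {V : Type*} [Fintype V] {S : V → Type*} [∀ i, Fintype (S i)]
    (μ : ∀ i, S i → ℝ) : Prop :=
  ∀ i, inSimplex (μ i)

/-- Payoff to population `i` of pure strategy `s` given beliefs `μ`. -/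
def payoffTo {V : Type*} [Fintype V] {S : V → Type*} [∀ i, Fintype (S i)]
    (E : V → V → Prop) [DecidableRel E] (A : ∀ i j, S i → S j → ℝ)
    (μ : ∀ i, S i → ℝ) (i : V) (s : S i) : ℝ :=
  ∑ j, if E i j then ∑ s' : S j, A i j s s' * μ j s' else 0

/-- Logit best response of population `i` to beliefs `μ`, rationality `β`. -/
noncomputable def BR {V : Type*} [Fintype V] {S : V → Type*} [∀ i, Fintype (S i)]
    (E : V → V → Prop) [DecidableRel E] (A : ∀ i j, S i → S j → ℝ) (β : ℝ)
    (μ : ∀ i, S i → ℝ) (i : V) (s : S i) : ℝ :=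
  Real.exp (β * payoffTo E A μ i s) / ∑ s' : S i, Real.exp (β * payoffTo E A μ i s')

/-- Quantal response equilibrium. -/
def isQRE {V : Type*} [Fintype V] {S : V → Type*} [∀ i, Fintype (S i)]
    (E : V → V → Prop) [DecidableRel E] (A : ∀ i j, S i → S j → ℝ) (β : ℝ)
    (x : ∀ i, S i → ℝ) : Prop :=
  inProd x ∧ ∀ i, x i = BR E A β x i

/-- The bilinear form `x_iᵀ A_{ij} y_j`. -/
def bilin {V : Type*} {S : V → Type*} [∀ i, Fintype (S i)]
    (A : ∀ i j, S i → S j → ℝ) (x y : ∀ i, S i → ℝ) (i j : V) : ℝ :=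
  ∑ s : S i, ∑ s' : S j, x i s * A i j s s' * y j s'

/-- The game is weighted zero-sum with weights `ω`. -/
def weightedZeroSum {V : Type*} [Fintype V] {S : V → Type*} [∀ i, Fintype (S i)]
    (E : V → V → Prop) [DecidableRel E] (A : ∀ i j, S i → S j → ℝ)
    (ω : V → ℝ) : Prop :=
  ∀ x, inProd x → ∑ i, ω i * ∑ j, (if E i j then bilin A x x i j else 0) = 0

/-- Entropy perturbation `v_β(x) = -(1/β) Σ_s x s · ln (x s)` (`Real.log 0 = 0`). -/
noncomputable def vEnt {S : Type*} [Fintype S] (β : ℝ) (x : S → ℝ) : ℝ :=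
  -(1 / β) * ∑ s, x s * Real.log (x s)

/-- Perturbed payoff `π_i(x_i, μ)`. -/
noncomputable def pPay {V : Type*} [Fintype V] {S : V → Type*} [∀ i, Fintype (S i)]
    (E : V → V → Prop) [DecidableRel E] (A : ∀ i j, S i → S j → ℝ) (β : ℝ)
    (μ : ∀ i, S i → ℝ) (i : V) (xi : S i → ℝ) : ℝ :=
  (∑ j, if E i j then ∑ s : S i, ∑ s' : S j, xi s * A i j s s' * μ j s' else 0)
    + vEnt β xi

/-- Second partial derivative of `μ ↦ BR_i(μ)(s)` (on the ambient space) in the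
coordinate `(j, s')`, evaluated at `μ`. -/
noncomputable def secondPartialBR {V : Type*} [Fintype V] [DecidableEq V]
    {S : V → Type*} [∀ i, Fintype (S i)] [∀ i, DecidableEq (S i)]
    (E : V → V → Prop) [DecidableRel E] (A : ∀ i j, S i → S j → ℝ) (β : ℝ)
    (μ : ∀ i, S i → ℝ) (i : V) (s : S i) (j : V) (s' : S j) : ℝ :=
  iteratedDeriv 2 (fun r : ℝ =>
    BR E A β (fun k => μ k + r • Pi.single (M := fun k => S k → ℝ) j (Pi.single s' (1 : ℝ)) k) i s) 0

/-- The `(i,s)`-component of the time-reparameterized mean-belief vector field of an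
initially heterogeneous system with initial belief variances `σ2`. -/
noncomputable def heteroField {V : Type*} [Fintype V] [DecidableEq V]
    {S : V → Type*} [∀ i, Fintype (S i)] [∀ i, DecidableEq (S i)]
    (E : V → V → Prop) [DecidableRel E] (A : ∀ i j, S i → S j → ℝ) (β : ℝ)
    (σ2 : ∀ j, S j → ℝ) (τ : ℝ) (μ : ∀ i, S i → ℝ) (i : V) (s : S i) : ℝ :=
  BR E A β μ i s - μ i s + (1 / 2) * Real.exp (-2 * τ) *
    ∑ j, if E i j then
      ∑ s' : S j, σ2 j s' * secondPartialBR E A β μ i s j s' else 0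


set_option linter.unusedSectionVars false
set_option linter.deprecated false
set_option maxHeartbeats 1000000
open RealInnerProductSpace

lemma klterm_le {a b : ℝ} (ha : 0 ≤ a) (hb : 0 < b) : a - b ≤ a * Real.log (a / b) := by
  rcases eq_or_lt_of_le ha with h | h
  · simp [← h]; positivity
  · have h1 : Real.log (b / a) ≤ b / a - 1 := Real.log_le_sub_one_of_pos (by positivity)
    have h2 : Real.log (a / b) = - Real.log (b / a) := by
      rw [← Real.log_inv]; congr 1; field_simp
    have h3 : a * Real.log (b / a) ≤ a * (b / a - 1) := mul_le_mul_of_nonneg_left h1 h.le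
    have h4 : a * (b / a - 1) = b - a := by field_simp
    rw [h2, mul_neg]; linarith

lemma klterm_lt {a b : ℝ} (ha : 0 ≤ a) (hb : 0 < b) (hne : a ≠ b) :
    a - b < a * Real.log (a / b) := by
  rcases eq_or_lt_of_le ha with h | h
  · simp [← h]; linarith
  · have hba : b / a ≠ 1 := by
      intro hc; apply hne; field_simp at hc; linarith
    have h1 : Real.log (b / a) < b / a - 1 := Real.log_lt_sub_one_of_pos (by positivity) hba
    have h2 : Real.log (a / b) = - Real.log (b / a) := by
      rw [← Real.log_inv]; congr 1; field_simp
    have h3 : a * Real.log (b / a) < a * (b / a - 1) := by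
      exact (mul_lt_mul_iff_right₀ h).mpr h1
    have h4 : a * (b / a - 1) = b - a := by field_simp
    rw [h2, mul_neg]; linarith

/-- Strict Gibbs variational principle. -/
lemma gibbs_lt {S : Type*} [Fintype S] [Nonempty S] {β : ℝ} (hβ : 0 < β) (u : S → ℝ)
    {z : S → ℝ} (hz : inSimplex z)
    (hne : z ≠ fun s => Real.exp (β * u s) / ∑ t, Real.exp (β * u t)) :
    (∑ s, z s * u s) + vEnt β z <
      (∑ s, (Real.exp (β * u s) / ∑ t, Real.exp (β * u t)) * u s) +
        vEnt β (fun s => Real.exp (β * u s) / ∑ t, Real.exp (β * u t)) := by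
  set Z : ℝ := ∑ t, Real.exp (β * u t) with hZ
  have hZpos : 0 < Z := Finset.sum_pos (fun t _ => Real.exp_pos _) Finset.univ_nonempty
  set p : S → ℝ := fun s => Real.exp (β * u s) / Z with hp
  have hppos : ∀ s, 0 < p s := fun s => by positivity
  have hpsum : ∑ s, p s = 1 := by
    rw [hp]; rw [← Finset.sum_div]; field_simp; exact hZ.symm
  have hlogp : ∀ s, Real.log (p s) = β * u s - Real.log Z := by
    intro s
    rw [hp, Real.log_div (Real.exp_ne_zero _) (ne_of_gt hZpos), Real.log_exp]
  -- value at p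
  have hfp : (∑ s, p s * u s) + vEnt β p = (1 / β) * Real.log Z := by
    rw [vEnt]
    have : ∑ s, p s * Real.log (p s) = β * (∑ s, p s * u s) - Real.log Z := by
      have : ∀ s, p s * Real.log (p s) = β * (p s * u s) - Real.log Z * p s := by
        intro s; rw [hlogp s]; ring
      rw [Finset.sum_congr rfl (fun s _ => this s), Finset.sum_sub_distrib,
        ← Finset.mul_sum, ← Finset.mul_sum, hpsum, mul_one]
    rw [this]; field_simp; ring
  -- difference = KL
  have key : ((∑ s, p s * u s) + vEnt β p) - ((∑ s, z s * u s) + vEnt β z)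
      = (1 / β) * ∑ s, z s * Real.log (z s / p s) := by
    rw [hfp, vEnt]
    have hterm : ∀ s, z s * Real.log (z s / p s)
        = z s * Real.log (z s) - β * (z s * u s) + z s * Real.log Z := by
      intro s
      rcases eq_or_lt_of_le (hz.1 s) with h | h
      · simp [← h]
      · rw [Real.log_div (ne_of_gt h) (ne_of_gt (hppos s)), hlogp s]; ring
    rw [Finset.sum_congr rfl (fun s _ => hterm s)]
    rw [Finset.sum_add_distrib, Finset.sum_sub_distrib, ← Finset.sum_mul, hz.2,
      ← Finset.mul_sum]
    field_simp
    ring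
  -- KL > 0
  have hKL : 0 < ∑ s, z s * Real.log (z s / p s) := by
    have hzsum : ∑ s, (z s - p s) = 0 := by
      rw [Finset.sum_sub_distrib, hz.2, hpsum]; ring
    have hle : ∀ s ∈ Finset.univ, z s - p s ≤ z s * Real.log (z s / p s) :=
      fun s _ => klterm_le (hz.1 s) (hppos s)
    obtain ⟨s0, hs0⟩ : ∃ s0, z s0 ≠ p s0 := by
      by_contra hc; push_neg at hc; exact hne (funext hc)
    have hlt : z s0 - p s0 < z s0 * Real.log (z s0 / p s0) :=
      klterm_lt (hz.1 s0) (hppos s0) hs0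
    calc 0 = ∑ s, (z s - p s) := hzsum.symm
      _ < ∑ s, z s * Real.log (z s / p s) :=
        Finset.sum_lt_sum hle ⟨s0, Finset.mem_univ s0, hlt⟩
  have : 0 < (1 / β) * ∑ s, z s * Real.log (z s / p s) := by positivity
  linarith [key, this]

section VI
variable {H : Type*} [NormedAddCommGroup H] [InnerProductSpace ℝ H] [CompleteSpace H]

/-- Existence of a solution to a strongly monotone variational inequality on a
nonempty closed convex set. -/
lemma exists_VI_solution {K : Set H} (hne : K.Nonempty) (hcl : IsClosed K)
    (hcv : Convex ℝ K) (F : H → H) {κ L : ℝ} (hκ : 0 < κ) (hκL : κ < L)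
    (hmono : ∀ x ∈ K, ∀ y ∈ K, ⟪F x - F y, x - y⟫ ≤ -κ * ‖x - y‖ ^ 2)
    (hlip : ∀ x ∈ K, ∀ y ∈ K, ‖F x - F y‖ ≤ L * ‖x - y‖) :
    ∃ x ∈ K, ∀ w ∈ K, ⟪F x, w - x⟫ ≤ 0 := by
  -- the metric projection onto K
  have hproj : ∀ u : H, ∃ v ∈ K, ‖u - v‖ = ⨅ w : K, ‖u - w‖ :=
    exists_norm_eq_iInf_of_complete_convex hne hcl.isComplete hcv
  choose P hPmem hPspec using hproj
  have hPvar : ∀ u : H, ∀ w ∈ K, ⟪u - P u, w - P u⟫ ≤ 0 := fun u =>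
    (norm_eq_iInf_iff_real_inner_le_zero hcv (hPmem u)).mp (hPspec u)
  have hPnonexp : ∀ u v : H, ‖P u - P v‖ ≤ ‖u - v‖ := by
    intro u v
    have h1 : ⟪u - P u, P v - P u⟫ ≤ 0 := hPvar u (P v) (hPmem v)
    have h2 : ⟪v - P v, P u - P v⟫ ≤ 0 := hPvar v (P u) (hPmem u)
    have h2' : ⟪P v - v, P v - P u⟫ ≤ 0 := by
      have : P v - v = -(v - P v) := by abel
      have h3 : P v - P u = -(P u - P v) := by abel
      rw [this, h3, inner_neg_neg]; exact h2
    have hsum : ⟪(u - v) - (P u - P v), P v - P u⟫ ≤ 0 := by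
      have : (u - v) - (P u - P v) = (u - P u) + (P v - v) := by abel
      rw [this, inner_add_left]
      have h4 : P v - P u = P v - P u := rfl
      calc ⟪u - P u, P v - P u⟫ + ⟪P v - v, P v - P u⟫ ≤ 0 + 0 :=
        add_le_add h1 h2'
        _ = 0 := by ring
    have key : ‖P u - P v‖ ^ 2 ≤ ⟪u - v, P u - P v⟫ := by
      have := hsum
      rw [inner_sub_left] at this
      have h5 : ⟪P u - P v, P v - P u⟫ = -‖P u - P v‖ ^ 2 := by
        have : P v - P u = -(P u - P v) := by abel
        rw [this, inner_neg_right, real_inner_self_eq_norm_sq]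
      have h6 : ⟪u - v, P v - P u⟫ = -⟪u - v, P u - P v⟫ := by
        have : P v - P u = -(P u - P v) := by abel
        rw [this, inner_neg_right]
      rw [h5, h6] at this; linarith
    rcases eq_or_lt_of_le (norm_nonneg (P u - P v)) with h | h
    · rw [← h]; exact norm_nonneg _
    · have := key.trans (real_inner_le_norm (u - v) (P u - P v))
      have h7 : ‖P u - P v‖ * ‖P u - P v‖ ≤ ‖u - v‖ * ‖P u - P v‖ := by nlinarith
      exact le_of_mul_le_mul_right h7 h
  -- the contraction x ↦ P (x + γ F x)
  have hL : 0 < L := hκ.trans hκL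
  set γ : ℝ := κ / L ^ 2 with hγ
  have hγpos : 0 < γ := by positivity
  set k2 : ℝ := 1 - κ ^ 2 / L ^ 2 with hk2
  have hk2pos : 0 < k2 := by
    rw [hk2]
    have : κ ^ 2 / L ^ 2 < 1 := by
      rw [div_lt_one (by positivity)]
      nlinarith
    linarith
  have hk2lt : k2 < 1 := by
    rw [hk2]; have : 0 < κ ^ 2 / L ^ 2 := by positivity
    linarith
  set k : ℝ := Real.sqrt k2 with hk
  have hkpos : 0 ≤ k := Real.sqrt_nonneg _
  have hklt : k < 1 := by
    rw [hk]; rw [show (1:ℝ) = Real.sqrt 1 by simp]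
    exact Real.sqrt_lt_sqrt hk2pos.le hk2lt
  set T : H → H := fun x => P (x + γ • F x) with hT
  have hTmem : ∀ x, T x ∈ K := fun x => hPmem _
  have hTcontr : ∀ x ∈ K, ∀ y ∈ K, ‖T x - T y‖ ≤ k * ‖x - y‖ := by
    intro x hx y hy
    have step1 : ‖T x - T y‖ ≤ ‖(x + γ • F x) - (y + γ • F y)‖ := hPnonexp _ _
    have step2 : ‖(x + γ • F x) - (y + γ • F y)‖ ^ 2 ≤ k2 * ‖x - y‖ ^ 2 := by
      have heq : (x + γ • F x) - (y + γ • F y) = (x - y) + γ • (F x - F y) := by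
        rw [smul_sub]; abel
      rw [heq, norm_add_sq_real, inner_smul_right, norm_smul]
      have hm := hmono x hx y hy
      have hl := hlip x hx y hy
      have hinner : ⟪x - y, F x - F y⟫ = ⟪F x - F y, x - y⟫ := real_inner_comm _ _
      have hnsq : (‖γ • (F x - F y)‖ : ℝ) = |γ| * ‖F x - F y‖ := by
        rw [norm_smul, Real.norm_eq_abs]
      have habs : |γ| = γ := abs_of_pos hγpos
      rw [hinner]
      have h1 : 2 * (γ * ⟪F x - F y, x - y⟫) ≤ 2 * (γ * (-κ * ‖x - y‖ ^ 2)) := by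
        have := mul_le_mul_of_nonneg_left hm hγpos.le
        linarith
      have h2 : (‖γ‖ * ‖F x - F y‖) ^ 2 ≤ γ ^ 2 * (L * ‖x - y‖) ^ 2 := by
        rw [Real.norm_eq_abs, habs]
        have h3 : 0 ≤ γ * ‖F x - F y‖ := by positivity
        have := mul_le_mul_of_nonneg_left hl hγpos.le
        nlinarith [norm_nonneg (F x - F y), norm_nonneg (x - y)]
      have hγval : 1 - 2 * (γ * κ) + γ ^ 2 * L ^ 2 = k2 := by
        rw [hγ, hk2]; field_simp; ring
      nlinarith [norm_nonneg (x - y)]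
    have step3 : ‖(x + γ • F x) - (y + γ • F y)‖ ≤ k * ‖x - y‖ := by
      have hkk : (k * ‖x - y‖) ^ 2 = k2 * ‖x - y‖ ^ 2 := by
        rw [mul_pow, hk, Real.sq_sqrt hk2pos.le]
      have h0 : 0 ≤ k * ‖x - y‖ := by positivity
      nlinarith [norm_nonneg ((x + γ • F x) - (y + γ • F y))]
    exact step1.trans step3
  -- Banach fixed point on the subtype K
  haveI : Nonempty K := hne.to_subtype
  haveI : CompleteSpace K := hcl.completeSpace_coe
  set Tsub : K → K := fun x => ⟨T x, hTmem x⟩ with hTsub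
  have hcontr : ContractingWith ⟨k, hkpos⟩ Tsub := by
    constructor
    · exact_mod_cast hklt
    · apply LipschitzWith.of_dist_le_mul
      intro a b
      rw [Subtype.dist_eq, Subtype.dist_eq, dist_eq_norm, dist_eq_norm]
      exact hTcontr a a.2 b b.2
  obtain ⟨xf, hxf⟩ := hcontr.exists_fixedPoint (Nonempty.some ‹Nonempty K›)
    (by rw [edist_dist]; exact ENNReal.ofReal_ne_top)
  have hfix : P ((xf : H) + γ • F (xf : H)) = (xf : H) := congrArg Subtype.val hxf.1
  refine ⟨xf, xf.2, ?_⟩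
  intro w hw
  have hvar := hPvar ((xf : H) + γ • F xf) w hw
  rw [hfix] at hvar
  have : (xf : H) + γ • F xf - xf = γ • F xf := by abel
  rw [this, inner_smul_left] at hvar
  simp only [RCLike.conj_to_real] at hvar
  by_contra hcon
  push_neg at hcon
  nlinarith [mul_pos hγpos hcon]

end VI

section Game

variable {V : Type*} [Fintype V] [Nonempty V] [DecidableEq V]
  {S : V → Type*} [∀ i, Fintype (S i)] [∀ i, Nonempty (S i)] [∀ i, DecidableEq (S i)]
  (E : V → V → Prop) [DecidableRel E] (A : ∀ i j, S i → S j → ℝ) (β : ℝ) (ω : V → ℝ)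

instance sigNE : Nonempty ((i : V) × S i) :=
  ⟨⟨Classical.arbitrary V, Classical.arbitrary _⟩⟩

/-- A uniform bound on payoffs over the product of simplices. -/
noncomputable def pB : ℝ :=
  ∑ j : V, Finset.univ.sup' Finset.univ_nonempty
    (fun q : ((i : V) × S i) × S j => |A q.1.1 j q.1.2 q.2|)

lemma pB_nonneg : 0 ≤ pB A := by
  apply Finset.sum_nonneg
  intro j _
  obtain ⟨q⟩ : Nonempty (((i : V) × S i) × S j) := inferInstance
  exact le_trans (abs_nonneg _)
    (Finset.le_sup' (fun q : ((i : V) × S i) × S j => |A q.1.1 j q.1.2 q.2|)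
      (Finset.mem_univ q))

lemma inSimplex_le_one {S' : Type*} [Fintype S'] {x : S' → ℝ} (h : inSimplex x) (s : S') :
    x s ≤ 1 := by
  rw [← h.2]
  exact Finset.single_le_sum (fun t _ => h.1 t) (Finset.mem_univ s)

lemma payoff_abs_le {μ : ∀ i, S i → ℝ} (hμ : inProd μ) (i : V) (s : S i) :
    |payoffTo E A μ i s| ≤ pB A := by
  rw [payoffTo, pB]
  refine le_trans (Finset.abs_sum_le_sum_abs _ _) (Finset.sum_le_sum ?_)
  intro j _
  set B : ℝ := Finset.univ.sup' Finset.univ_nonempty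
    (fun q : ((i : V) × S i) × S j => |A q.1.1 j q.1.2 q.2|) with hB
  have hBb : ∀ s' : S j, |A i j s s'| ≤ B := fun s' =>
    Finset.le_sup' (fun q : ((i : V) × S i) × S j => |A q.1.1 j q.1.2 q.2|)
      (Finset.mem_univ (⟨⟨i, s⟩, s'⟩ : ((i : V) × S i) × S j))
  have hB0 : 0 ≤ B := le_trans (abs_nonneg _) (hBb (Classical.arbitrary _))
  split
  · refine le_trans (Finset.abs_sum_le_sum_abs _ _) ?_
    have : ∀ s' : S j, |A i j s s' * μ j s'| ≤ B * μ j s' := by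
      intro s'
      rw [abs_mul, abs_of_nonneg ((hμ j).1 s')]
      exact mul_le_mul_of_nonneg_right (hBb s') ((hμ j).1 s')
    refine le_trans (Finset.sum_le_sum (fun s' _ => this s')) ?_
    rw [← Finset.mul_sum, (hμ j).2, mul_one]
  · simpa using hB0

/-- The uniform lower bound on logit responses. -/
noncomputable def dl : ℝ :=
  Real.exp (-(2 * β * pB A)) / (Fintype.card ((i : V) × S i))

lemma dl_pos : 0 < dl A β := by
  rw [dl]
  have : 0 < (Fintype.card ((i : V) × S i) : ℝ) := by
    exact_mod_cast Fintype.card_pos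
  positivity

lemma card_le_cardSigma (i : V) :
    (Fintype.card (S i) : ℝ) ≤ (Fintype.card ((i : V) × S i) : ℝ) := by
  have : Fintype.card (S i) ≤ Fintype.card ((i : V) × S i) := by
    rw [Fintype.card_sigma]
    exact Finset.single_le_sum (f := fun j => Fintype.card (S j))
      (fun j _ => Nat.zero_le _) (Finset.mem_univ i)
  exact_mod_cast this

lemma dl_le_inv_card (hβ : 0 < β) (i : V) :
    dl A β ≤ 1 / (Fintype.card (S i)) := by
  rw [dl]
  have h1 : Real.exp (-(2 * β * pB A)) ≤ 1 := by
    rw [Real.exp_le_one_iff]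
    have := pB_nonneg (S := S) A
    nlinarith
  have h2 : (0:ℝ) < Fintype.card (S i) := by exact_mod_cast Fintype.card_pos
  have h3 : (0:ℝ) < Fintype.card ((i : V) × S i) := by exact_mod_cast Fintype.card_pos
  have := card_le_cardSigma (S := S) i
  rw [div_le_div_iff₀ h3 h2]
  nlinarith

lemma BR_inSimplex (μ : ∀ i, S i → ℝ) (i : V) : inSimplex (BR E A β μ i) := by
  have hZ : 0 < ∑ s' : S i, Real.exp (β * payoffTo E A μ i s') :=
    Finset.sum_pos (fun t _ => Real.exp_pos _) Finset.univ_nonempty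
  constructor
  · intro s; rw [BR]; positivity
  · simp only [BR]
    rw [← Finset.sum_div, div_self (ne_of_gt hZ)]

lemma BR_ge (hβ : 0 < β) {μ : ∀ i, S i → ℝ} (hμ : inProd μ) (i : V) (s : S i) :
    dl A β ≤ BR E A β μ i s := by
  have hC := pB_nonneg (S := S) A
  have hub : ∀ t : S i, Real.exp (β * payoffTo E A μ i t) ≤ Real.exp (β * pB A) := by
    intro t
    apply Real.exp_le_exp.mpr
    have := payoff_abs_le E A hμ i t
    have := abs_le.mp this
    nlinarith
  have hlb : Real.exp (-(β * pB A)) ≤ Real.exp (β * payoffTo E A μ i s) := by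
    apply Real.exp_le_exp.mpr
    have := abs_le.mp (payoff_abs_le E A hμ i s)
    nlinarith
  have hZle : ∑ t : S i, Real.exp (β * payoffTo E A μ i t)
      ≤ (Fintype.card (S i)) * Real.exp (β * pB A) := by
    calc ∑ t : S i, Real.exp (β * payoffTo E A μ i t)
        ≤ ∑ _t : S i, Real.exp (β * pB A) := Finset.sum_le_sum (fun t _ => hub t)
      _ = (Fintype.card (S i)) * Real.exp (β * pB A) := by
          rw [Finset.sum_const, Finset.card_univ, nsmul_eq_mul]
  have hZpos : 0 < ∑ t : S i, Real.exp (β * payoffTo E A μ i t) :=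
    Finset.sum_pos (fun t _ => Real.exp_pos _) Finset.univ_nonempty
  have hcard : (0:ℝ) < Fintype.card (S i) := by exact_mod_cast Fintype.card_pos
  have hNc : (0:ℝ) < Fintype.card ((i : V) × S i) := by exact_mod_cast Fintype.card_pos
  have hcardle := card_le_cardSigma (S := S) i
  rw [BR, dl]
  rw [div_le_div_iff₀ hNc hZpos]
  calc Real.exp (-(2 * β * pB A)) * (∑ t : S i, Real.exp (β * payoffTo E A μ i t))
      ≤ Real.exp (-(2 * β * pB A)) * ((Fintype.card (S i)) * Real.exp (β * pB A)) := by
        exact mul_le_mul_of_nonneg_left hZle (Real.exp_pos _).le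
    _ = (Fintype.card (S i)) * Real.exp (-(β * pB A)) := by
        rw [show Real.exp (-(2 * β * pB A)) = Real.exp (-(β * pB A)) * Real.exp (-(β * pB A))
          by rw [← Real.exp_add]; ring_nf]
        rw [show Real.exp (β * pB A) = (Real.exp (-(β * pB A)))⁻¹
          by rw [← Real.exp_neg]; ring_nf]
        field_simp
    _ ≤ (Fintype.card ((i : V) × S i)) * Real.exp (β * payoffTo E A μ i s) := by
        apply mul_le_mul hcardle hlb (Real.exp_pos _).le hNc.le
    _ = Real.exp (β * payoffTo E A μ i s) * (Fintype.card ((i : V) × S i)) := by ring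

/-- The truncated product of simplices, inside Euclidean space. -/
def Dset : Set (EuclideanSpace ℝ ((i : V) × S i)) :=
  {y | ∀ i : V, (∀ s : S i, dl A β ≤ y ⟨i, s⟩) ∧ ∑ s : S i, y ⟨i, s⟩ = 1}

lemma Dset_nonempty (hβ : 0 < β) : (Dset (S := S) A β).Nonempty := by
  refine ⟨WithLp.toLp 2 (fun p : (i : V) × S i => 1 / (Fintype.card (S p.1))), fun i => ⟨fun s => ?_, ?_⟩⟩
  · exact dl_le_inv_card (S := S) A β hβ i
  · have hcard : (0:ℝ) < Fintype.card (S i) := by exact_mod_cast Fintype.card_pos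
    have h : ∑ _s : S i, (1 / (Fintype.card (S i) : ℝ)) = 1 := by
      rw [Finset.sum_const, Finset.card_univ, nsmul_eq_mul]; field_simp
    exact h
lemma Dset_closed : IsClosed (Dset (S := S) A β) := by
  have : Dset (S := S) A β =
      (⋂ i : V, ⋂ s : S i, {y : EuclideanSpace ℝ ((i : V) × S i) | dl A β ≤ y ⟨i, s⟩}) ∩
      (⋂ i : V, {y : EuclideanSpace ℝ ((i : V) × S i) | ∑ s : S i, y ⟨i, s⟩ = 1}) := by
    ext y
    simp only [Dset, Set.mem_setOf_eq, Set.mem_inter_iff, Set.mem_iInter]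
    constructor
    · intro h; exact ⟨fun i s => (h i).1 s, fun i => (h i).2⟩
    · intro h i; exact ⟨fun s => h.1 i s, h.2 i⟩
  rw [this]
  have hconti : ∀ p : (i : V) × S i,
      Continuous (fun y : EuclideanSpace ℝ ((i : V) × S i) => y p) := by
    intro p
    exact (continuous_apply p).comp (PiLp.continuousLinearEquiv 2 ℝ _).continuous
  apply IsClosed.inter
  · exact isClosed_iInter (fun i => isClosed_iInter (fun s =>
      isClosed_le continuous_const (hconti ⟨i, s⟩)))
  · exact isClosed_iInter (fun i =>
      isClosed_eq (by continuity) continuous_const)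

lemma Dset_convex : Convex ℝ (Dset (S := S) A β) := by
  intro x hx y hy a b ha hb hab
  intro i
  constructor
  · intro s
    have h1 := (hx i).1 s
    have h2 := (hy i).1 s
    have : (a • x + b • y) ⟨i, s⟩ = a * x ⟨i, s⟩ + b * y ⟨i, s⟩ := rfl
    rw [this]
    nlinarith [dl_pos (S := S) A β]
  · have : ∀ s : S i, (a • x + b • y) ⟨i, s⟩ = a * x ⟨i, s⟩ + b * y ⟨i, s⟩ := fun s => rfl
    rw [Finset.sum_congr rfl (fun s _ => this s), Finset.sum_add_distrib,
      ← Finset.mul_sum, ← Finset.mul_sum, (hx i).2, (hy i).2]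
    simpa using hab

lemma Dset_inProd {y : EuclideanSpace ℝ ((i : V) × S i)} (hy : y ∈ Dset (S := S) A β) :
    inProd (fun i s => y ⟨i, s⟩) := by
  intro i
  exact ⟨fun s => le_trans (dl_pos (S := S) A β).le ((hy i).1 s), (hy i).2⟩

end Game

section ZS
variable {V : Type*} [Fintype V] [Nonempty V] [DecidableEq V]
  {S : V → Type*} [∀ i, Fintype (S i)] [∀ i, Nonempty (S i)] [∀ i, DecidableEq (S i)]
  (E : V → V → Prop) [DecidableRel E] (A : ∀ i j, S i → S j → ℝ) (ω : V → ℝ)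

/-- The weighted aggregate bilinear form. -/
def qf (u v : ∀ i, S i → ℝ) : ℝ :=
  ∑ i, ω i * ∑ j, (if E i j then ∑ s : S i, ∑ s' : S j, u i s * A i j s s' * v j s' else 0)

lemma inner2_congr {u v u' v' : ∀ i, S i → ℝ} (i j : V)
    (h : ∀ s s', u i s * A i j s s' * v j s' = u' i s * A i j s s' * v' j s') :
    ∑ s : S i, ∑ s' : S j, u i s * A i j s s' * v j s'
      = ∑ s : S i, ∑ s' : S j, u' i s * A i j s s' * v' j s' :=
  Finset.sum_congr rfl (fun s _ => Finset.sum_congr rfl (fun s' _ => h s s'))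

lemma qf_congr {u v u' v' : ∀ i, S i → ℝ}
    (h : ∀ i j s s', u i s * A i j s s' * v j s' = u' i s * A i j s s' * v' j s') :
    qf E A ω u v = qf E A ω u' v' := by
  apply Finset.sum_congr rfl
  intro i _
  congr 1
  apply Finset.sum_congr rfl
  intro j _
  split
  · exact inner2_congr A i j (h i j)
  · rfl

lemma qf_smul (c c' : ℝ) (u v : ∀ i, S i → ℝ) :
    qf E A ω (fun i s => c * u i s) (fun i s => c' * v i s) = c * c' * qf E A ω u v := by
  rw [qf, qf, Finset.mul_sum]
  apply Finset.sum_congr rfl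
  intro i _
  rw [show c * c' * (ω i * ∑ j, (if E i j then
      ∑ s : S i, ∑ s' : S j, u i s * A i j s s' * v j s' else 0))
    = ω i * ∑ j, (c * c') * (if E i j then
      ∑ s : S i, ∑ s' : S j, u i s * A i j s s' * v j s' else 0) by
        rw [← Finset.mul_sum]; ring]
  congr 1
  apply Finset.sum_congr rfl
  intro j _
  rw [mul_ite, mul_zero]
  split
  · rw [Finset.mul_sum]
    apply Finset.sum_congr rfl
    intro s _
    rw [Finset.mul_sum]
    apply Finset.sum_congr rfl
    intro s' _
    ring
  · rfl

lemma qf_add (u v w z : ∀ i, S i → ℝ) :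
    qf E A ω (fun i s => u i s + v i s) (fun i s => w i s + z i s)
      = qf E A ω u w + qf E A ω u z + qf E A ω v w + qf E A ω v z := by
  rw [qf, qf, qf, qf, qf, ← Finset.sum_add_distrib, ← Finset.sum_add_distrib,
    ← Finset.sum_add_distrib]
  apply Finset.sum_congr rfl
  intro i _
  rw [← mul_add, ← mul_add, ← mul_add]
  congr 1
  rw [← Finset.sum_add_distrib, ← Finset.sum_add_distrib, ← Finset.sum_add_distrib]
  apply Finset.sum_congr rfl
  intro j _
  split
  · rw [← Finset.sum_add_distrib, ← Finset.sum_add_distrib, ← Finset.sum_add_distrib]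
    apply Finset.sum_congr rfl
    intro s _
    rw [← Finset.sum_add_distrib, ← Finset.sum_add_distrib, ← Finset.sum_add_distrib]
    apply Finset.sum_congr rfl
    intro s' _
    ring
  · simp

/-- Aggregate bilinear form vanishes on differences of simplex points. -/
lemma qf_diff_zero (hzs : weightedZeroSum E A ω) {x y : ∀ i, S i → ℝ}
    (hx : inProd x) (hy : inProd y) :
    qf E A ω (fun i s => x i s - y i s) (fun i s => x i s - y i s) = 0 := by
  have hq : ∀ z, inProd z → qf E A ω z z = 0 := by
    intro z hz
    have := hzs z hz
    rw [qf]
    convert this using 2 with i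
    rfl
  have hm : inProd (fun i s => (1/2 : ℝ) * (x i s + y i s)) := by
    intro i
    constructor
    · intro s
      have := (hx i).1 s; have := (hy i).1 s
      positivity
    · rw [← Finset.mul_sum, Finset.sum_add_distrib, (hx i).2, (hy i).2]
      norm_num
  have hmm := hq _ hm
  rw [qf_smul E A ω (1/2) (1/2) (fun i s => x i s + y i s) (fun i s => x i s + y i s)] at hmm
  have hexp := qf_add E A ω x y x y
  have hcross : qf E A ω x y + qf E A ω y x = 0 := by
    have hxx := hq x hx
    have hyy := hq y hy
    have h4 : qf E A ω (fun i s => x i s + y i s) (fun i s => x i s + y i s) = 0 := by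
      nlinarith [hmm]
    rw [hexp] at h4
    linarith
  have hneg : ∀ u v : ∀ i, S i → ℝ, qf E A ω u (fun i s => -(v i s)) = -qf E A ω u v := by
    intro u v
    have := qf_smul E A ω 1 (-1) u v
    simp only [one_mul, neg_one_mul, neg_mul] at this
    rw [← this]
    all_goals apply qf_congr
    all_goals (intro i j s s'; ring)
  have hnegl : ∀ u v : ∀ i, S i → ℝ, qf E A ω (fun i s => -(u i s)) v = -qf E A ω u v := by
    intro u v
    have := qf_smul E A ω (-1) 1 u v
    simp only [one_mul, neg_one_mul, neg_mul, mul_one] at this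
    rw [← this]
    all_goals apply qf_congr
    all_goals (intro i j s s'; ring)
  have hsub : qf E A ω (fun i s => x i s - y i s) (fun i s => x i s - y i s)
      = qf E A ω x x - qf E A ω x y - qf E A ω y x + qf E A ω y y := by
    have h5 := qf_add E A ω x (fun i s => -(y i s)) x (fun i s => -(y i s))
    have h6 : qf E A ω (fun i s => x i s + -(y i s)) (fun i s => x i s + -(y i s))
        = qf E A ω (fun i s => x i s - y i s) (fun i s => x i s - y i s) := by
      apply qf_congr; intro i j s s'; ring
    rw [h6] at h5
    rw [h5, hneg, hnegl, hnegl]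
    have := hneg (fun i s => -(y i s))
    rw [hneg]
    ring
  rw [hsub, hq x hx, hq y hy]
  linarith
end ZS

section Core
variable {V : Type*} [Fintype V] [Nonempty V] [DecidableEq V]
  {S : V → Type*} [∀ i, Fintype (S i)] [∀ i, Nonempty (S i)] [∀ i, DecidableEq (S i)]
  (E : V → V → Prop) [DecidableRel E] (A : ∀ i j, S i → S j → ℝ) (β : ℝ) (ω : V → ℝ)

lemma sigma_sum {f : ((i : V) × S i) → ℝ} : ∑ p : (i : V) × S i, f p = ∑ i, ∑ s, f ⟨i, s⟩ := by
  rw [← Finset.univ_sigma_univ, Finset.sum_sigma]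

lemma coord_le_norm (v : EuclideanSpace ℝ ((i : V) × S i)) (p : (i : V) × S i) :
    |v p| ≤ ‖v‖ := by
  rw [EuclideanSpace.norm_eq]
  rw [show |v p| = Real.sqrt (|v p| ^ 2) by rw [Real.sqrt_sq (abs_nonneg _)]]
  apply Real.sqrt_le_sqrt
  exact Finset.single_le_sum (f := fun q => ‖v q‖ ^ 2) (fun q _ => by positivity)
    (Finset.mem_univ p)

lemma norm_le_of_coord {v : EuclideanSpace ℝ ((i : V) × S i)} {c : ℝ} (hc : 0 ≤ c)
    (h : ∀ p, |v p| ≤ c) :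
    ‖v‖ ≤ Real.sqrt (Fintype.card ((i : V) × S i)) * c := by
  rw [EuclideanSpace.norm_eq]
  rw [show Real.sqrt (Fintype.card ((i : V) × S i)) * c
    = Real.sqrt ((Fintype.card ((i : V) × S i)) * c ^ 2) by
      rw [Real.sqrt_mul (by positivity), Real.sqrt_sq hc]]
  apply Real.sqrt_le_sqrt
  calc ∑ q, ‖v q‖ ^ 2 ≤ ∑ _q : (i : V) × S i, c ^ 2 := by
        apply Finset.sum_le_sum
        intro q _
        rw [Real.norm_eq_abs]
        exact pow_le_pow_left₀ (abs_nonneg _) (h q) 2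
    _ = (Fintype.card ((i : V) × S i)) * c ^ 2 := by
        rw [Finset.sum_const, Finset.card_univ, nsmul_eq_mul]

lemma payoffTo_sub (x y : ∀ i, S i → ℝ) (i : V) (s : S i) :
    payoffTo E A x i s - payoffTo E A y i s
      = ∑ j, if E i j then ∑ s' : S j, A i j s s' * (x j s' - y j s') else 0 := by
  rw [payoffTo, payoffTo, ← Finset.sum_sub_distrib]
  apply Finset.sum_congr rfl
  intro j _
  split
  · rw [← Finset.sum_sub_distrib]
    apply Finset.sum_congr rfl
    intro s' _
    ring
  · simp

lemma sum_payoff_diff_mul (x y d : ∀ i, S i → ℝ) :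
    ∑ i, ω i * ∑ s, (payoffTo E A x i s - payoffTo E A y i s) * d i s
      = qf E A ω d (fun i s => x i s - y i s) := by
  rw [qf]
  apply Finset.sum_congr rfl
  intro i _
  congr 1
  rw [Finset.sum_congr rfl (fun s (_ : s ∈ Finset.univ) => by
    rw [payoffTo_sub E A x y i s, Finset.sum_mul])]
  rw [Finset.sum_comm]
  apply Finset.sum_congr rfl
  intro j _
  rw [Finset.sum_congr rfl (fun s (_ : s ∈ Finset.univ) => by
    rw [ite_mul, zero_mul, Finset.sum_mul])]
  rw [Finset.sum_ite_irrel, Finset.sum_const_zero]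
  split
  · apply Finset.sum_congr rfl
    intro s _
    apply Finset.sum_congr rfl
    intro s' _
    ring
  · rfl

lemma log_mono_ineq {a b : ℝ} (ha0 : 0 < a) (hb0 : 0 < b) (ha1 : a ≤ 1) (hb1 : b ≤ 1) :
    (a - b) ^ 2 ≤ (Real.log a - Real.log b) * (a - b) := by
  rcases le_total b a with h | h
  · have h1 : Real.log (b / a) ≤ b / a - 1 := Real.log_le_sub_one_of_pos (by positivity)
    have h2 : Real.log b - Real.log a = Real.log (b / a) := (Real.log_div hb0.ne' ha0.ne').symm
    have h3 : (a - b) / a ≤ Real.log a - Real.log b := by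
      have h6 : 1 - b / a = (a - b) / a := by field_simp
      linarith [h2 ▸ h1]
    have h4 : a - b ≤ (a - b) / a := by
      rw [le_div_iff₀ ha0]; nlinarith
    nlinarith
  · have h1 : Real.log (a / b) ≤ a / b - 1 := Real.log_le_sub_one_of_pos (by positivity)
    have h2 : Real.log a - Real.log b = Real.log (a / b) := (Real.log_div ha0.ne' hb0.ne').symm
    have h3 : (b - a) / b ≤ Real.log b - Real.log a := by
      have h6 : 1 - a / b = (b - a) / b := by field_simp
      linarith [h2 ▸ h1]
    have h4 : b - a ≤ (b - a) / b := by
      rw [le_div_iff₀ hb0]; nlinarith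
    nlinarith

lemma log_lip {d0 a b : ℝ} (hd : 0 < d0) (ha : d0 ≤ a) (hb : d0 ≤ b) :
    |Real.log a - Real.log b| ≤ |a - b| / d0 := by
  have ha0 : 0 < a := lt_of_lt_of_le hd ha
  have hb0 : 0 < b := lt_of_lt_of_le hd hb
  have key : ∀ u v : ℝ, d0 ≤ u → d0 ≤ v → v ≤ u →
      Real.log u - Real.log v ≤ (u - v) / d0 := by
    intro u v hu hv huv
    have hu0 : 0 < u := lt_of_lt_of_le hd hu
    have hv0 : 0 < v := lt_of_lt_of_le hd hv
    have h1 : Real.log (u / v) ≤ u / v - 1 := Real.log_le_sub_one_of_pos (by positivity)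
    have h2 : Real.log u - Real.log v = Real.log (u / v) := (Real.log_div hu0.ne' hv0.ne').symm
    have h6 : u / v - 1 = (u - v) / v := by field_simp
    have h7 : (u - v) / v ≤ (u - v) / d0 :=
      div_le_div_of_nonneg_left (by linarith) hd hv
    linarith [h2 ▸ h1]
  rcases le_total b a with h | h
  · have h5 : 0 ≤ Real.log a - Real.log b :=
      sub_nonneg.mpr (Real.log_le_log hb0 h)
    rw [abs_of_nonneg h5, abs_of_nonneg (by linarith : (0:ℝ) ≤ a - b)]
    exact key a b ha hb h
  · have h5 : Real.log a - Real.log b ≤ 0 :=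
      sub_nonpos.mpr (Real.log_le_log ha0 h)
    rw [abs_of_nonpos h5, abs_of_nonpos (by linarith : a - b ≤ (0:ℝ))]
    have := key b a hb ha h
    have heq : -(a - b) / d0 = (b - a) / d0 := by ring
    linarith

end Core

section Core2
variable {V : Type*} [Fintype V] [Nonempty V] [DecidableEq V]
  {S : V → Type*} [∀ i, Fintype (S i)] [∀ i, Nonempty (S i)] [∀ i, DecidableEq (S i)]
  (E : V → V → Prop) [DecidableRel E] (A : ∀ i j, S i → S j → ℝ) (β : ℝ) (ω : V → ℝ)

lemma gibbs_le {S' : Type*} [Fintype S'] [Nonempty S'] {β : ℝ} (hβ : 0 < β) (u : S' → ℝ)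
    {z : S' → ℝ} (hz : inSimplex z) :
    (∑ s, z s * u s) + vEnt β z ≤
      (∑ s, (Real.exp (β * u s) / ∑ t, Real.exp (β * u t)) * u s) +
        vEnt β (fun s => Real.exp (β * u s) / ∑ t, Real.exp (β * u t)) := by
  by_cases h : z = fun s => Real.exp (β * u s) / ∑ t, Real.exp (β * u t)
  · rw [h]
  · exact (gibbs_lt hβ u hz h).le

lemma concave_step {S' : Type*} [Fintype S'] {β : ℝ} (hβ : 0 < β) (u x p : S' → ℝ)
    (hx0 : ∀ s, 0 < x s) (hx1 : ∑ s, x s = 1) (hp : inSimplex p) :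
    ((∑ s, p s * u s) + vEnt β p) - ((∑ s, x s * u s) + vEnt β x)
      ≤ ∑ s, (u s - (1/β) * Real.log (x s)) * (p s - x s) := by
  have per : ∀ s, p s - x s ≤ p s * Real.log (p s) - p s * Real.log (x s) := by
    intro s
    have hk := klterm_le (hp.1 s) (hx0 s)
    rcases eq_or_lt_of_le (hp.1 s) with h | h
    · rw [← h]; simp; linarith [hx0 s]
    · rw [Real.log_div (ne_of_gt h) (ne_of_gt (hx0 s)), mul_sub] at hk
      exact hk
  have hsum : ∑ s, (p s - x s) ≤ ∑ s, (p s * Real.log (p s) - p s * Real.log (x s)) :=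
    Finset.sum_le_sum (fun s _ => per s)
  have h0 : ∑ s, (p s - x s) = 0 := by
    rw [Finset.sum_sub_distrib, hp.2, hx1]; ring
  rw [h0] at hsum
  rw [Finset.sum_sub_distrib] at hsum
  -- expand everything
  have hRHS : ∑ s, (u s - (1/β) * Real.log (x s)) * (p s - x s)
      = ((∑ s, p s * u s) - (∑ s, x s * u s))
        - (1/β) * ((∑ s, p s * Real.log (x s)) - (∑ s, x s * Real.log (x s))) := by
    have : ∀ s, (u s - (1/β) * Real.log (x s)) * (p s - x s)
        = (p s * u s - x s * u s)
          - (1/β) * (p s * Real.log (x s) - x s * Real.log (x s)) := by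
      intro s; ring
    rw [Finset.sum_congr rfl (fun s _ => this s), Finset.sum_sub_distrib,
      Finset.sum_sub_distrib, ← Finset.mul_sum, Finset.sum_sub_distrib]
  rw [hRHS, vEnt, vEnt]
  set Spp := ∑ s, p s * Real.log (p s)
  set Sxx := ∑ s, x s * Real.log (x s)
  set Spx := ∑ s, p s * Real.log (x s)
  have hc : (0:ℝ) ≤ 1/β := by positivity
  have hs : Spx - Spp ≤ 0 := by
    have : ∑ s, p s * Real.log (x s) = Spx := rfl
    linarith [hsum]
  nlinarith [mul_nonneg hc (by linarith : (0:ℝ) ≤ Spp - Spx)]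

/-- The weighted pseudo-gradient field. -/
noncomputable def Fop (y : EuclideanSpace ℝ ((i : V) × S i)) :
    EuclideanSpace ℝ ((i : V) × S i) :=
  WithLp.toLp 2 fun p => ω p.1 * (payoffTo E A (fun i s => y ⟨i, s⟩) p.1 p.2 - (1/β) * Real.log (y p))

lemma Fop_mono (hβ : 0 < β) (hω : ∀ i, 0 < ω i) (hzs : weightedZeroSum E A ω) :
    ∀ x ∈ Dset (S := S) A β, ∀ y ∈ Dset (S := S) A β,
      ⟪Fop E A β ω x - Fop E A β ω y, x - y⟫
        ≤ -((Finset.univ.inf' Finset.univ_nonempty ω) / β) * ‖x - y‖ ^ 2 := by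
  intro x hx y hy
  set wmin := Finset.univ.inf' Finset.univ_nonempty ω with hwmin
  have hwminpos : 0 < wmin := by
    obtain ⟨i, _, hi⟩ := Finset.exists_mem_eq_inf' (Finset.univ_nonempty) ω
    rw [hwmin, hi]; exact hω i
  set ψx : ∀ i, S i → ℝ := fun i s => x ⟨i, s⟩ with hψx
  set ψy : ∀ i, S i → ℝ := fun i s => y ⟨i, s⟩ with hψy
  have hinner : ⟪Fop E A β ω x - Fop E A β ω y, x - y⟫
      = ∑ p : (i : V) × S i, (Fop E A β ω x p - Fop E A β ω y p) * (x p - y p) := by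
    rw [PiLp.inner_apply]
    apply Finset.sum_congr rfl
    intro p _
    rw [PiLp.sub_apply, PiLp.sub_apply, RCLike.inner_apply, conj_trivial]; ring
  have hsplit : ∀ p : (i : V) × S i,
      (Fop E A β ω x p - Fop E A β ω y p) * (x p - y p)
        = ω p.1 * ((payoffTo E A ψx p.1 p.2 - payoffTo E A ψy p.1 p.2) * (x p - y p))
          - (1/β) * (ω p.1 * ((Real.log (x p) - Real.log (y p)) * (x p - y p))) := by
    intro p
    simp only [Fop, WithLp.ofLp_toLp]
    ring
  have hG : ∑ p : (i : V) × S i,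
      ω p.1 * ((payoffTo E A ψx p.1 p.2 - payoffTo E A ψy p.1 p.2) * (x p - y p)) = 0 := by
    rw [sigma_sum (S := S)]
    have : ∀ i, ∑ s : S i,
        ω i * ((payoffTo E A ψx i s - payoffTo E A ψy i s) * (x ⟨i, s⟩ - y ⟨i, s⟩))
        = ω i * ∑ s : S i,
          (payoffTo E A ψx i s - payoffTo E A ψy i s) * (fun i s => x ⟨i, s⟩ - y ⟨i, s⟩) i s := by
      intro i
      rw [Finset.mul_sum]
    rw [Finset.sum_congr rfl (fun i _ => this i)]
    rw [sum_payoff_diff_mul E A ω ψx ψy (fun i s => x ⟨i, s⟩ - y ⟨i, s⟩)]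
    have hd : (fun i s => x ⟨i, s⟩ - y ⟨i, s⟩) = (fun i s => ψx i s - ψy i s) := rfl
    rw [hd]
    exact qf_diff_zero E A ω hzs (Dset_inProd A β hx) (Dset_inProd A β hy)
  have hnorm : ‖x - y‖ ^ 2 = ∑ p : (i : V) × S i, (x p - y p) ^ 2 := by
    rw [← real_inner_self_eq_norm_sq, PiLp.inner_apply]
    apply Finset.sum_congr rfl
    intro p _
    rw [RCLike.inner_apply, conj_trivial, PiLp.sub_apply]
    ring
  have hE : ∀ p : (i : V) × S i,
      wmin * (x p - y p) ^ 2 ≤ ω p.1 * ((Real.log (x p) - Real.log (y p)) * (x p - y p)) := by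
    intro p
    have hx0 : 0 < x p := lt_of_lt_of_le (dl_pos (S := S) A β) ((hx p.1).1 p.2)
    have hy0 : 0 < y p := lt_of_lt_of_le (dl_pos (S := S) A β) ((hy p.1).1 p.2)
    have hx1 : x p ≤ 1 := inSimplex_le_one ((Dset_inProd A β hx) p.1) p.2
    have hy1 : y p ≤ 1 := inSimplex_le_one ((Dset_inProd A β hy) p.1) p.2
    have hlog := log_mono_ineq hx0 hy0 hx1 hy1
    have hwle : wmin ≤ ω p.1 := Finset.inf'_le ω (Finset.mem_univ p.1)
    nlinarith [sq_nonneg (x p - y p)]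
  have hEsum : wmin * ‖x - y‖ ^ 2
      ≤ ∑ p : (i : V) × S i, ω p.1 * ((Real.log (x p) - Real.log (y p)) * (x p - y p)) := by
    rw [hnorm, Finset.mul_sum]
    exact Finset.sum_le_sum (fun p _ => hE p)
  rw [hinner, Finset.sum_congr rfl (fun p _ => hsplit p), Finset.sum_sub_distrib, hG,
    ← Finset.mul_sum]
  have hc : (0:ℝ) < 1/β := by positivity
  have hh := mul_le_mul_of_nonneg_left hEsum hc.le
  have heq : -(wmin / β) * ‖x - y‖ ^ 2 = -(1/β * (wmin * ‖x - y‖ ^ 2)) := by ring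
  rw [heq]
  linarith [hh]
end Core2

section Core3
variable {V : Type*} [Fintype V] [Nonempty V] [DecidableEq V]
  {S : V → Type*} [∀ i, Fintype (S i)] [∀ i, Nonempty (S i)] [∀ i, DecidableEq (S i)]
  (E : V → V → Prop) [DecidableRel E] (A : ∀ i j, S i → S j → ℝ) (β : ℝ) (ω : V → ℝ)

/-- A global bound on the entries of the payoff matrices. -/
noncomputable def Amax : ℝ :=
  Finset.univ.sup' Finset.univ_nonempty
    (fun q : ((i : V) × S i) × ((j : V) × S j) => |A q.1.1 q.2.1 q.1.2 q.2.2|)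

lemma Amax_nonneg : 0 ≤ Amax A := by
  obtain ⟨q⟩ : Nonempty (((i : V) × S i) × ((j : V) × S j)) := inferInstance
  exact le_trans (abs_nonneg _)
    (Finset.le_sup' (fun q : ((i : V) × S i) × ((j : V) × S j) =>
      |A q.1.1 q.2.1 q.1.2 q.2.2|) (Finset.mem_univ q))

lemma Amax_le (i j : V) (s : S i) (s' : S j) : |A i j s s'| ≤ Amax A :=
  Finset.le_sup' (fun q : ((i : V) × S i) × ((j : V) × S j) =>
    |A q.1.1 q.2.1 q.1.2 q.2.2|) (Finset.mem_univ (⟨⟨i, s⟩, ⟨j, s'⟩⟩ : _))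

/-- The Lipschitz constant for the pseudo-gradient field. -/
noncomputable def Lcon : ℝ :=
  Real.sqrt (Fintype.card ((i : V) × S i)) *
    ((Finset.univ.sup' Finset.univ_nonempty ω) *
      (Amax A * (Fintype.card ((i : V) × S i)) + 1 / (β * dl A β)))

lemma Fop_lip (hβ : 0 < β) (hω : ∀ i, 0 < ω i) :
    ∀ x ∈ Dset (S := S) A β, ∀ y ∈ Dset (S := S) A β,
      ‖Fop E A β ω x - Fop E A β ω y‖ ≤ Lcon (S := S) A β ω * ‖x - y‖ := by
  intro x hx y hy
  set W := Finset.univ.sup' Finset.univ_nonempty ω with hW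
  have hWpos : 0 < W := by
    obtain ⟨i⟩ : Nonempty V := inferInstance
    exact lt_of_lt_of_le (hω i) (Finset.le_sup' ω (Finset.mem_univ i))
  set N : ℝ := (Fintype.card ((i : V) × S i) : ℝ) with hN
  have hNpos : (0:ℝ) < N := by rw [hN]; exact_mod_cast Fintype.card_pos
  set dlv := dl (S := S) A β with hdlv
  have hdlpos : 0 < dlv := dl_pos (S := S) A β
  set K := W * (Amax A * N + 1 / (β * dlv)) with hK
  have hKpos : 0 < K := by
    have := Amax_nonneg (S := S) A
    have h1 : 0 < 1 / (β * dlv) := by positivity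
    have : 0 < Amax A * N + 1 / (β * dlv) := by positivity
    positivity
  set ψx : ∀ i, S i → ℝ := fun i s => x ⟨i, s⟩ with hψx
  set ψy : ∀ i, S i → ℝ := fun i s => y ⟨i, s⟩ with hψy
  have hcoord : ∀ p : (i : V) × S i,
      |(Fop E A β ω x - Fop E A β ω y) p| ≤ K * ‖x - y‖ := by
    intro p
    have happ : (Fop E A β ω x - Fop E A β ω y) p
        = ω p.1 * ((payoffTo E A ψx p.1 p.2 - payoffTo E A ψy p.1 p.2)
            - (1/β) * (Real.log (x p) - Real.log (y p))) := by
      rw [PiLp.sub_apply]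
      simp only [Fop, WithLp.ofLp_toLp]
      ring
    rw [happ, abs_mul, abs_of_pos (hω p.1)]
    have hωle : ω p.1 ≤ W := Finset.le_sup' ω (Finset.mem_univ p.1)
    have hUdiff : |payoffTo E A ψx p.1 p.2 - payoffTo E A ψy p.1 p.2|
        ≤ Amax A * N * ‖x - y‖ := by
      rw [payoffTo_sub E A ψx ψy p.1 p.2]
      refine le_trans (Finset.abs_sum_le_sum_abs _ _) ?_
      have hjb : ∀ j : V, |if E p.1 j then
            ∑ s' : S j, A p.1 j p.2 s' * (ψx j s' - ψy j s') else 0|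
          ≤ ∑ s' : S j, Amax A * ‖x - y‖ := by
        intro j
        have hterm : ∀ s' : S j, |A p.1 j p.2 s' * (ψx j s' - ψy j s')|
            ≤ Amax A * ‖x - y‖ := by
          intro s'
          rw [abs_mul]
          have h1 : |ψx j s' - ψy j s'| ≤ ‖x - y‖ := by
            have : ψx j s' - ψy j s' = (x - y) ⟨j, s'⟩ := by
              rw [PiLp.sub_apply]
            rw [this]
            exact coord_le_norm (x - y) ⟨j, s'⟩
          exact mul_le_mul (Amax_le (S := S) A p.1 j p.2 s') h1 (abs_nonneg _)
            (Amax_nonneg (S := S) A)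
        split
        · exact le_trans (Finset.abs_sum_le_sum_abs _ _)
            (Finset.sum_le_sum (fun s' _ => hterm s'))
        · simp only [abs_zero]
          apply Finset.sum_nonneg
          intro s' _
          exact mul_nonneg (Amax_nonneg (S := S) A) (norm_nonneg _)
      refine le_trans (Finset.sum_le_sum (fun j _ => hjb j)) ?_
      have hsum : ∑ j : V, ∑ _s' : S j, Amax A * ‖x - y‖
          = (∑ j : V, (Fintype.card (S j) : ℝ)) * (Amax A * ‖x - y‖) := by
        rw [Finset.sum_mul]
        apply Finset.sum_congr rfl
        intro j _
        rw [Finset.sum_const, Finset.card_univ, nsmul_eq_mul]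
      rw [hsum]
      have hcard : (∑ j : V, (Fintype.card (S j) : ℝ)) = N := by
        rw [hN, Fintype.card_sigma]
        push_cast
        rfl
      rw [hcard]
      exact le_of_eq (by ring)
    have hLdiff : |Real.log (x p) - Real.log (y p)| ≤ ‖x - y‖ / dlv := by
      have h1 := log_lip hdlpos ((hx p.1).1 p.2) ((hy p.1).1 p.2)
      have h2 : |x p - y p| ≤ ‖x - y‖ := by
        have : x p - y p = (x - y) p := by rw [PiLp.sub_apply]
        rw [this]; exact coord_le_norm (x - y) p
      calc |Real.log (x p) - Real.log (y p)| ≤ |x p - y p| / dlv := h1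
        _ ≤ ‖x - y‖ / dlv := by
            exact div_le_div_of_nonneg_right h2 hdlpos.le
    calc ω p.1 * |(payoffTo E A ψx p.1 p.2 - payoffTo E A ψy p.1 p.2)
          - (1/β) * (Real.log (x p) - Real.log (y p))|
        ≤ W * (|payoffTo E A ψx p.1 p.2 - payoffTo E A ψy p.1 p.2|
            + (1/β) * |Real.log (x p) - Real.log (y p)|) := by
          have habs : |(payoffTo E A ψx p.1 p.2 - payoffTo E A ψy p.1 p.2)
              - (1/β) * (Real.log (x p) - Real.log (y p))|
              ≤ |payoffTo E A ψx p.1 p.2 - payoffTo E A ψy p.1 p.2|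
                + (1/β) * |Real.log (x p) - Real.log (y p)| := by
            refine le_trans (abs_sub _ _) ?_
            rw [abs_mul, abs_of_pos (by positivity : (0:ℝ) < 1/β)]
          exact mul_le_mul hωle habs (abs_nonneg _) hWpos.le
      _ ≤ W * (Amax A * N * ‖x - y‖ + (1/β) * (‖x - y‖ / dlv)) := by
          apply mul_le_mul_of_nonneg_left _ hWpos.le
          have h3 : (1/β) * |Real.log (x p) - Real.log (y p)| ≤ (1/β) * (‖x - y‖ / dlv) :=
            mul_le_mul_of_nonneg_left hLdiff (by positivity)
          linarith [hUdiff]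
      _ = K * ‖x - y‖ := by
          rw [hK]; field_simp
  have := norm_le_of_coord (v := Fop E A β ω x - Fop E A β ω y)
    (mul_nonneg hKpos.le (norm_nonneg _)) hcoord
  calc ‖Fop E A β ω x - Fop E A β ω y‖
      ≤ Real.sqrt (Fintype.card ((i : V) × S i)) * (K * ‖x - y‖) := this
    _ = Lcon (S := S) A β ω * ‖x - y‖ := by rw [Lcon]; ring
end Core3

section Main
variable {V : Type*} [Fintype V] [Nonempty V] [DecidableEq V]
  {S : V → Type*} [∀ i, Fintype (S i)] [∀ i, Nonempty (S i)] [∀ i, DecidableEq (S i)]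
  (E : V → V → Prop) [DecidableRel E] (A : ∀ i j, S i → S j → ℝ) (β : ℝ) (ω : V → ℝ)

lemma exists_QRE (hβ : 0 < β) (hω : ∀ i, 0 < ω i) (hzs : weightedZeroSum E A ω) :
    ∃ x : ∀ i, S i → ℝ, isQRE E A β x := by
  set wmin := Finset.univ.inf' Finset.univ_nonempty ω with hwmin
  have hwminpos : 0 < wmin := by
    obtain ⟨i, _, hi⟩ := Finset.exists_mem_eq_inf' (Finset.univ_nonempty) ω
    rw [hwmin, hi]; exact hω i
  set κ := wmin / β with hκ
  have hκpos : 0 < κ := by positivity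
  have hLnonneg : 0 ≤ Lcon (S := S) A β ω := by
    rw [Lcon]
    have hWpos : 0 < Finset.univ.sup' Finset.univ_nonempty ω := by
      obtain ⟨i⟩ : Nonempty V := inferInstance
      exact lt_of_lt_of_le (hω i) (Finset.le_sup' ω (Finset.mem_univ i))
    have h1 : 0 < 1 / (β * dl (S := S) A β) := by
      have := dl_pos (S := S) A β; positivity
    have h2 : (0:ℝ) ≤ Amax A * (Fintype.card ((i : V) × S i)) := by
      have := Amax_nonneg (S := S) A; positivity
    have : 0 ≤ Amax A * (Fintype.card ((i : V) × S i)) + 1 / (β * dl (S := S) A β) := by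
      linarith
    positivity
  set L := Lcon (S := S) A β ω + κ + 1 with hL
  have hκL : κ < L := by rw [hL]; linarith
  have hmono' : ∀ x ∈ Dset (S := S) A β, ∀ y ∈ Dset (S := S) A β,
      ⟪Fop E A β ω x - Fop E A β ω y, x - y⟫ ≤ -κ * ‖x - y‖ ^ 2 := by
    intro x hx y hy
    have := Fop_mono E A β ω hβ hω hzs x hx y hy
    calc ⟪Fop E A β ω x - Fop E A β ω y, x - y⟫
        ≤ -(wmin / β) * ‖x - y‖ ^ 2 := this
      _ = -κ * ‖x - y‖ ^ 2 := by rw [hκ]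
  have hlip' : ∀ x ∈ Dset (S := S) A β, ∀ y ∈ Dset (S := S) A β,
      ‖Fop E A β ω x - Fop E A β ω y‖ ≤ L * ‖x - y‖ := by
    intro x hx y hy
    have h1 := Fop_lip E A β ω hβ hω x hx y hy
    have h2 : Lcon (S := S) A β ω * ‖x - y‖ ≤ L * ‖x - y‖ := by
      apply mul_le_mul_of_nonneg_right _ (norm_nonneg _)
      rw [hL]; linarith
    linarith
  obtain ⟨x, hxD, hVI⟩ := exists_VI_solution (Dset_nonempty (S := S) A β hβ)
    (Dset_closed (S := S) A β) (Dset_convex (S := S) A β) (Fop E A β ω) hκpos hκL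
    hmono' hlip'
  set ψx : ∀ i, S i → ℝ := fun i s => x ⟨i, s⟩ with hψx
  have hψ : inProd ψx := Dset_inProd A β hxD
  set z : EuclideanSpace ℝ ((i : V) × S i) := WithLp.toLp 2 (fun p : (i : V) × S i => BR E A β ψx p.1 p.2) with hz
  have hzD : z ∈ Dset (S := S) A β := by
    intro i
    exact ⟨fun s => BR_ge E A β hβ hψ i s, (BR_inSimplex E A β ψx i).2⟩
  have hvi := hVI z hzD
  have hBReq : ∀ i, BR E A β ψx i
      = fun s => Real.exp (β * payoffTo E A ψx i s)
          / ∑ t, Real.exp (β * payoffTo E A ψx i t) := fun i => rfl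
  -- rewrite the VI as a weighted sum over populations
  set T : V → ℝ := fun i => ∑ s, (payoffTo E A ψx i s - (1/β) * Real.log (ψx i s))
    * (BR E A β ψx i s - ψx i s) with hT
  have hviT : ∑ i, ω i * T i ≤ 0 := by
    have hinner : ⟪Fop E A β ω x, z - x⟫ = ∑ i, ω i * T i := by
      have h1 : ⟪Fop E A β ω x, z - x⟫
          = ∑ p : (i : V) × S i, Fop E A β ω x p * (z p - x p) := by
        rw [PiLp.inner_apply]
        apply Finset.sum_congr rfl
        intro p _
        rw [RCLike.inner_apply, conj_trivial, PiLp.sub_apply]; ring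
      rw [h1, sigma_sum (S := S)]
      apply Finset.sum_congr rfl
      intro i _
      rw [hT, Finset.mul_sum]
      apply Finset.sum_congr rfl
      intro s _
      simp only [Fop, WithLp.ofLp_toLp]
      ring
    rw [← hinner]; exact hvi
  have hTnonneg : ∀ i, 0 ≤ T i := by
    intro i
    have hx0 : ∀ s, 0 < ψx i s :=
      fun s => lt_of_lt_of_le (dl_pos (S := S) A β) ((hxD i).1 s)
    have hcs := concave_step hβ (payoffTo E A ψx i) (ψx i) (BR E A β ψx i)
      hx0 (hψ i).2 (BR_inSimplex E A β ψx i)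
    have hgb : (∑ s, ψx i s * payoffTo E A ψx i s) + vEnt β (ψx i)
        ≤ (∑ s, BR E A β ψx i s * payoffTo E A ψx i s) + vEnt β (BR E A β ψx i) :=
      gibbs_le hβ (payoffTo E A ψx i) (hψ i)
    simp only [hT]
    linarith
  have hfix : ∀ i, ψx i = BR E A β ψx i := by
    by_contra hcon
    push_neg at hcon
    obtain ⟨i0, hi0⟩ := hcon
    have hTpos : 0 < T i0 := by
      have hx0 : ∀ s, 0 < ψx i0 s :=
        fun s => lt_of_lt_of_le (dl_pos (S := S) A β) ((hxD i0).1 s)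
      have hcs := concave_step hβ (payoffTo E A ψx i0) (ψx i0) (BR E A β ψx i0)
        hx0 (hψ i0).2 (BR_inSimplex E A β ψx i0)
      have hgb : (∑ s, ψx i0 s * payoffTo E A ψx i0 s) + vEnt β (ψx i0)
          < (∑ s, BR E A β ψx i0 s * payoffTo E A ψx i0 s) + vEnt β (BR E A β ψx i0) :=
        gibbs_lt hβ (payoffTo E A ψx i0) (hψ i0) (by rw [← hBReq i0]; exact hi0)
      simp only [hT]
      linarith
    have : (0:ℝ) < ∑ i, ω i * T i := by
      have h0 : (0:ℝ) = ∑ i : V, (0:ℝ) := by simp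
      rw [h0]
      apply Finset.sum_lt_sum
      · intro i _; exact mul_nonneg (hω i).le (hTnonneg i)
      · exact ⟨i0, Finset.mem_univ i0, mul_pos (hω i0) hTpos⟩
    linarith
  exact ⟨ψx, hψ, hfix⟩

lemma QRE_unique (hβ : 0 < β) (hω : ∀ i, 0 < ω i) (hzs : weightedZeroSum E A ω)
    {x y : ∀ i, S i → ℝ} (hqx : isQRE E A β x) (hqy : isQRE E A β y) : x = y := by
  by_contra hne
  have hxs : inProd x := hqx.1
  have hys : inProd y := hqy.1
  obtain ⟨i0, hi0⟩ : ∃ i, x i ≠ y i := by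
    by_contra hc; push_neg at hc; exact hne (funext hc)
  have hBRx : ∀ i, BR E A β x i
      = fun s => Real.exp (β * payoffTo E A x i s)
          / ∑ t, Real.exp (β * payoffTo E A x i t) := fun i => rfl
  have hBRy : ∀ i, BR E A β y i
      = fun s => Real.exp (β * payoffTo E A y i s)
          / ∑ t, Real.exp (β * payoffTo E A y i t) := fun i => rfl
  set g : V → ℝ := fun i =>
    ((∑ s, y i s * payoffTo E A x i s) + vEnt β (y i)
      - ((∑ s, x i s * payoffTo E A x i s) + vEnt β (x i)))
    + ((∑ s, x i s * payoffTo E A y i s) + vEnt β (x i)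
      - ((∑ s, y i s * payoffTo E A y i s) + vEnt β (y i))) with hg
  have hga : ∀ i, g i ≤ 0 := by
    intro i
    have h1 : (∑ s, y i s * payoffTo E A x i s) + vEnt β (y i)
        ≤ (∑ s, BR E A β x i s * payoffTo E A x i s) + vEnt β (BR E A β x i) :=
      gibbs_le hβ (payoffTo E A x i) (hys i)
    rw [← hqx.2 i] at h1
    have h2 : (∑ s, x i s * payoffTo E A y i s) + vEnt β (x i)
        ≤ (∑ s, BR E A β y i s * payoffTo E A y i s) + vEnt β (BR E A β y i) :=
      gibbs_le hβ (payoffTo E A y i) (hxs i)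
    rw [← hqy.2 i] at h2
    simp only [hg]
    linarith
  have hgi0 : g i0 < 0 := by
    have h1 : (∑ s, y i0 s * payoffTo E A x i0 s) + vEnt β (y i0)
        < (∑ s, BR E A β x i0 s * payoffTo E A x i0 s) + vEnt β (BR E A β x i0) :=
      gibbs_lt hβ (payoffTo E A x i0) (hys i0)
        (by rw [← hBRx i0, ← hqx.2 i0]; exact fun h => hi0 h.symm)
    rw [← hqx.2 i0] at h1
    have h2 : (∑ s, x i0 s * payoffTo E A y i0 s) + vEnt β (x i0)
        ≤ (∑ s, BR E A β y i0 s * payoffTo E A y i0 s) + vEnt β (BR E A β y i0) :=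
      gibbs_le hβ (payoffTo E A y i0) (hxs i0)
    rw [← hqy.2 i0] at h2
    simp only [hg]
    linarith
  have hsumneg : ∑ i, ω i * g i < 0 := by
    have h0 : (0:ℝ) = ∑ i : V, (0:ℝ) := by simp
    have : ∑ i, ω i * g i < ∑ i : V, (0:ℝ) := by
      apply Finset.sum_lt_sum
      · intro i _
        exact mul_nonpos_of_nonneg_of_nonpos (hω i).le (hga i)
      · refine ⟨i0, Finset.mem_univ i0, ?_⟩
        exact mul_neg_of_pos_of_neg (hω i0) hgi0
    simpa using this
  have hgsum : ∀ i, g i = ∑ s, (payoffTo E A x i s - payoffTo E A y i s) * (y i s - x i s) := by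
    intro i
    simp only [hg]
    have hper : ∑ s, (payoffTo E A x i s - payoffTo E A y i s) * (y i s - x i s)
        = ∑ s, (y i s * payoffTo E A x i s - x i s * payoffTo E A x i s
            + (x i s * payoffTo E A y i s - y i s * payoffTo E A y i s)) := by
      apply Finset.sum_congr rfl
      intro s _
      ring
    rw [hper, Finset.sum_add_distrib, Finset.sum_sub_distrib, Finset.sum_sub_distrib]
    ring
  have hzero : ∑ i, ω i * g i = 0 := by
    rw [Finset.sum_congr rfl (fun i _ => by rw [hgsum i])]
    rw [sum_payoff_diff_mul E A ω x y (fun i s => y i s - x i s)]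
    have h1 : qf E A ω (fun i s => y i s - x i s) (fun i s => x i s - y i s)
        = -qf E A ω (fun i s => y i s - x i s) (fun i s => y i s - x i s) := by
      have h2 := qf_smul E A ω 1 (-1) (fun i s => y i s - x i s) (fun i s => y i s - x i s)
      simp only [one_mul, neg_one_mul, neg_mul, mul_one] at h2
      rw [← h2]
      apply qf_congr
      intro i j s s'
      ring
    rw [h1, qf_diff_zero E A ω hzs hys hxs]
    ring
  linarith
end Main

/-- a weighted zero-sum population network game has exactly one
quantal response equilibrium for every `β > 0`. -/
theorem qre_unique_of_weightedZeroSum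
    {V : Type*} [Fintype V] [Nonempty V] [DecidableEq V]
    {S : V → Type*} [∀ i, Fintype (S i)] [∀ i, Nonempty (S i)] [∀ i, DecidableEq (S i)]
    (E : V → V → Prop) [DecidableRel E]
    (hE_symm : ∀ i j, E i j → E j i) (hE_irrefl : ∀ i, ¬ E i i)
    (A : ∀ i j, S i → S j → ℝ)
    (ω : V → ℝ) (hω : ∀ i, 0 < ω i) (hzs : weightedZeroSum E A ω)
    (β : ℝ) (hβ : 0 < β) :
    ∃! x, isQRE E A β x := by
  obtain ⟨x, hx⟩ := exists_QRE E A β ω hβ hω hzs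
  exact ⟨x, hx, fun y hy => QRE_unique E A β ω hβ hω hzs hy hx⟩
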